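/- For m a positive integer and R ≥ m real, ∑_{k=1}^{m}(R² − k²)^{1/2} ≤ (π/4)R² − (1/2)R + (√6/9)√(m + 1/2), where m = ⌊R⌋. In particular ∑_{k=1}^{⌊R⌋}(R² − k²)^{1/2} ≤ (π/4)R² − R/6. -/

import Mathlib

open Real intervalIntegral

lemma trapezoid_le {f : ℝ → ℝ} {a b : ℝ} (hab : a ≤ b)
    (hconc : ConcaveOn ℝ (Set.Icc a b) f) (hcont : Continuous f) :
    (b - a) * (f a + f b) / 2 ≤ ∫ x in a..b, f x := by
  rcases eq_or_lt_of_le hab with rfl | hlt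
  · simp
  have hba : 0 < b - a := by linarith
  have hle : ∀ x ∈ Set.Icc a b, (f a * b - f b * a) / (b - a) + ((f b - f a) / (b - a)) * x ≤ f x := by
    intro x hx
    obtain ⟨hx1, hx2⟩ := hx
    have h := hconc.2 (Set.left_mem_Icc.2 hab) (Set.right_mem_Icc.2 hab)
      (show (0:ℝ) ≤ (b - x) / (b - a) from div_nonneg (by linarith) hba.le)
      (show (0:ℝ) ≤ (x - a) / (b - a) from div_nonneg (by linarith) hba.le)
      (show (b - x) / (b - a) + (x - a) / (b - a) = 1 by field_simp; ring)
    have hxeq : ((b - x) / (b - a)) • a + ((x - a) / (b - a)) • b = x := by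
      simp only [smul_eq_mul]; field_simp [hba.ne']; ring
    rw [hxeq] at h
    calc (f a * b - f b * a) / (b - a) + ((f b - f a) / (b - a)) * x
        = ((b - x) / (b - a)) • f a + ((x - a) / (b - a)) • f b := by
          simp only [smul_eq_mul]; field_simp; ring
      _ ≤ f x := h
  have h1 : IntervalIntegrable (fun x => (f a * b - f b * a) / (b - a) + ((f b - f a) / (b - a)) * x) MeasureTheory.volume a b := by
    apply Continuous.intervalIntegrable; continuity
  have h2 : IntervalIntegrable f MeasureTheory.volume a b := hcont.intervalIntegrable a b
  have hmono := intervalIntegral.integral_mono_on hab h1 h2 hle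
  have hval : (∫ x in a..b, ((f a * b - f b * a) / (b - a) + ((f b - f a) / (b - a)) * x))
      = (b - a) * (f a + f b) / 2 := by
    rw [intervalIntegral.integral_add (intervalIntegrable_const)
      ((by continuity : Continuous fun x : ℝ => (f b - f a) / (b - a) * x).intervalIntegrable a b),
      intervalIntegral.integral_const, intervalIntegral.integral_const_mul, integral_id]
    simp only [smul_eq_mul]
    field_simp [hba.ne']
    ring
  linarith [hmono, hval.symm.le]


lemma concave_circ (R : ℝ) (hR : 0 ≤ R) :
    ConcaveOn ℝ (Set.Icc 0 R) (fun x => Real.sqrt (R ^ 2 - x ^ 2)) := by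
  refine ⟨convex_Icc _ _, fun x hx y hy a b ha hb hab => ?_⟩
  obtain ⟨hx0, hxR⟩ := hx
  obtain ⟨hy0, hyR⟩ := hy
  have hgx : (0:ℝ) ≤ R ^ 2 - x ^ 2 := by nlinarith
  have hgy : (0:ℝ) ≤ R ^ 2 - y ^ 2 := by nlinarith
  have h1 := Real.strictConcaveOn_sqrt.concaveOn.2 (Set.mem_Ici.2 hgx) (Set.mem_Ici.2 hgy) ha hb hab
  simp only [smul_eq_mul] at h1 ⊢
  have h2 : a * (R ^ 2 - x ^ 2) + b * (R ^ 2 - y ^ 2) ≤ R ^ 2 - (a * x + b * y) ^ 2 := by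
    have hb' : b = 1 - a := by linarith
    subst hb'
    nlinarith [mul_nonneg (mul_nonneg ha hb) (sq_nonneg (x - y))]
  calc a * √(R ^ 2 - x ^ 2) + b * √(R ^ 2 - y ^ 2)
      ≤ √(a * (R ^ 2 - x ^ 2) + b * (R ^ 2 - y ^ 2)) := h1
    _ ≤ √(R ^ 2 - (a * x + b * y) ^ 2) := Real.sqrt_le_sqrt h2

lemma quarter_circle_int (R : ℝ) (hR : 0 < R) :
    ∫ x in (0:ℝ)..R, Real.sqrt (R ^ 2 - x ^ 2) = π / 4 * R ^ 2 := by
  have hcont : Continuous fun x : ℝ => Real.sqrt (1 - x ^ 2) := by continuity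
  have heven : ∫ x in (0:ℝ)..1, Real.sqrt (1 - x ^ 2) = ∫ x in (-1:ℝ)..0, Real.sqrt (1 - x ^ 2) := by
    have := intervalIntegral.integral_comp_neg (a := (0:ℝ)) (b := 1) (fun x => Real.sqrt (1 - x ^ 2))
    simpa using this
  have hsplit : (∫ x in (-1:ℝ)..0, Real.sqrt (1 - x ^ 2)) + ∫ x in (0:ℝ)..1, Real.sqrt (1 - x ^ 2)
      = π / 2 := by
    rw [intervalIntegral.integral_add_adjacent_intervals (hcont.intervalIntegrable _ _)
      (hcont.intervalIntegrable _ _)]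
    exact integral_sqrt_one_sub_sq
  have hhalf : ∫ x in (0:ℝ)..1, Real.sqrt (1 - x ^ 2) = π / 4 := by linarith [heven]
  have hsub : ∫ x in (0:ℝ)..1, Real.sqrt (R ^ 2 - (R * x) ^ 2)
      = R⁻¹ * ∫ x in (0:ℝ)..R, Real.sqrt (R ^ 2 - x ^ 2) := by
    have := intervalIntegral.integral_comp_mul_left (a := (0:ℝ)) (b := 1)
      (fun x => Real.sqrt (R ^ 2 - x ^ 2)) (c := R) hR.ne'
    simpa [smul_eq_mul] using this
  have hscale : ∀ x : ℝ, Real.sqrt (R ^ 2 - (R * x) ^ 2) = R * Real.sqrt (1 - x ^ 2) := by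
    intro x
    rw [show R ^ 2 - (R * x) ^ 2 = R ^ 2 * (1 - x ^ 2) by ring, Real.sqrt_mul (sq_nonneg R),
      Real.sqrt_sq hR.le]
  simp only [hscale] at hsub
  rw [intervalIntegral.integral_const_mul, hhalf] at hsub
  field_simp at hsub
  linarith

set_option maxHeartbeats 1000000 in
/-- For real `R ≥ 1` and `m = ⌊R⌋`:
`∑_{k=1}^{m} √(R² - k²) ≤ (π/4)R² - R/2 + (√6/9)√(m + 1/2)`, and in particular
`∑_{k=1}^{⌊R⌋} √(R² - k²) ≤ (π/4)R² - R/6`. -/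
theorem quarter_disc_sum_upper (R : ℝ) (hR : 1 ≤ R) :
    (∑ k ∈ Finset.Icc 1 ⌊R⌋₊, Real.sqrt (R ^ 2 - (k : ℝ) ^ 2) ≤
        π / 4 * R ^ 2 - R / 2 + Real.sqrt 6 / 9 * Real.sqrt ((⌊R⌋₊ : ℝ) + 1 / 2)) ∧
      ∑ k ∈ Finset.Icc 1 ⌊R⌋₊, Real.sqrt (R ^ 2 - (k : ℝ) ^ 2) ≤
        π / 4 * R ^ 2 - R / 6 := by
  set f : ℝ → ℝ := fun x => Real.sqrt (R ^ 2 - x ^ 2) with hf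
  set m : ℕ := ⌊R⌋₊ with hmdef
  have hR0 : (0:ℝ) < R := by linarith
  have hm1 : 1 ≤ m := Nat.le_floor (by exact_mod_cast hR)
  have hmR : (m : ℝ) ≤ R := Nat.floor_le hR0.le
  have hRm : R < (m : ℝ) + 1 := Nat.lt_floor_add_one R
  have hm0 : (1:ℝ) ≤ (m:ℝ) := by exact_mod_cast hm1
  have hfc : Continuous f := by
    apply Real.continuous_sqrt.comp; continuity
  have hconc : ConcaveOn ℝ (Set.Icc 0 R) f := concave_circ R hR0.le
  have hf0 : f 0 = R := by
    rw [hf]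
    simp only
    rw [show R ^ 2 - (0:ℝ) ^ 2 = R ^ 2 by ring, Real.sqrt_sq hR0.le]
  have hfR : f R = 0 := by rw [hf]; simp
  have hfm2 : f (m:ℝ) ^ 2 = (R - m) * (R + m) := by
    rw [hf]
    simp only
    rw [Real.sq_sqrt (by nlinarith : (0:ℝ) ≤ R ^ 2 - (m:ℝ) ^ 2)]
    ring
  have hfm0 : 0 ≤ f (m:ℝ) := by rw [hf]; exact Real.sqrt_nonneg _
  show (∑ k ∈ Finset.Icc 1 m, f (k:ℝ) ≤
        π / 4 * R ^ 2 - R / 2 + Real.sqrt 6 / 9 * Real.sqrt ((m : ℝ) + 1 / 2)) ∧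
      ∑ k ∈ Finset.Icc 1 m, f (k:ℝ) ≤ π / 4 * R ^ 2 - R / 6
  clear_value f m
  -- step: trapezoid on each [i, i+1]
  have step : ∀ i ∈ Finset.range m, (f i + f ((i:ℝ)+1)) / 2 ≤ ∫ x in (i:ℝ)..((i:ℝ)+1), f x := by
    intro i hi
    have hi' : (i:ℝ) + 1 ≤ m := by
      have : i + 1 ≤ m := Finset.mem_range.1 hi
      exact_mod_cast this
    have hsub : Set.Icc (i:ℝ) ((i:ℝ)+1) ⊆ Set.Icc 0 R :=
      Set.Icc_subset_Icc (by positivity) (by linarith)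
    have h := trapezoid_le (by linarith : (i:ℝ) ≤ (i:ℝ)+1)
      (hconc.subset hsub (convex_Icc _ _)) hfc
    have he : ((i:ℝ)+1 - i) = 1 := by ring
    rw [he, one_mul] at h
    exact h
  -- sum of integrals
  have hadj := intervalIntegral.sum_integral_adjacent_intervals
    (a := fun i : ℕ => (i:ℝ)) (μ := MeasureTheory.volume) (f := f) (n := m)
    (fun k _ => hfc.intervalIntegrable _ _)
  push_cast at hadj
  have hsum1 : ∑ i ∈ Finset.range m, (f i + f ((i:ℝ)+1)) / 2 ≤ ∫ x in (0:ℝ)..(m:ℝ), f x := by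
    calc ∑ i ∈ Finset.range m, (f i + f ((i:ℝ)+1)) / 2
        ≤ ∑ i ∈ Finset.range m, ∫ x in (i:ℝ)..((i:ℝ)+1), f x := Finset.sum_le_sum step
      _ = ∫ x in (0:ℝ)..(m:ℝ), f x := hadj
  -- telescoping
  have htel : ∑ i ∈ Finset.range m, (f ((i:ℝ)+1) - f (i:ℝ)) = f (m:ℝ) - f 0 := by
    have := Finset.sum_range_sub (f := fun i : ℕ => f (i:ℝ)) m
    push_cast at this
    exact this
  have hS : ∑ k ∈ Finset.Icc 1 m, f (k:ℝ) = ∑ i ∈ Finset.range m, f ((i:ℝ)+1) := by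
    rw [show Finset.Icc 1 m = Finset.Ico 1 (m+1) from by rw [Finset.Ico_add_one_right_eq_Icc],
      Finset.sum_Ico_eq_sum_range]
    simp only [Nat.add_sub_cancel]
    refine Finset.sum_congr rfl (fun i _ => ?_)
    push_cast
    ring_nf
  have hrw : ∑ i ∈ Finset.range m, (f i + f ((i:ℝ)+1)) / 2
      = (∑ i ∈ Finset.range m, f ((i:ℝ)+1)) - (∑ i ∈ Finset.range m, (f ((i:ℝ)+1) - f (i:ℝ))) / 2 := by
    rw [show (∑ i ∈ Finset.range m, (f i + f ((i:ℝ)+1)) / 2)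
        = ((∑ i ∈ Finset.range m, f (i:ℝ)) + ∑ i ∈ Finset.range m, f ((i:ℝ)+1)) / 2 from by
      rw [← Finset.sum_add_distrib, Finset.sum_div], Finset.sum_sub_distrib]
    ring
  -- main sum bound : S ≤ ∫_0^m f - (R - f m)/2
  have hmain : ∑ k ∈ Finset.Icc 1 m, f (k:ℝ) ≤ (∫ x in (0:ℝ)..(m:ℝ), f x) - (R - f (m:ℝ)) / 2 := by
    rw [hS]
    rw [hrw, htel, hf0] at hsum1
    linarith
  -- split the integral
  have hsplit : (∫ x in (0:ℝ)..(m:ℝ), f x) + ∫ x in (m:ℝ)..R, f x = π / 4 * R ^ 2 := by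
    rw [intervalIntegral.integral_add_adjacent_intervals (hfc.intervalIntegrable _ _)
      (hfc.intervalIntegrable _ _)]
    simp only [hf]
    exact quarter_circle_int R hR0
  -- tail integral lower bound
  have htail : (R - (m:ℝ)) * f (m:ℝ) / 2 ≤ ∫ x in (m:ℝ)..R, f x := by
    have hsub : Set.Icc (m:ℝ) R ⊆ Set.Icc 0 R := Set.Icc_subset_Icc (by positivity) le_rfl
    have h := trapezoid_le hmR (hconc.subset hsub (convex_Icc _ _)) hfc
    rw [hfR] at h
    linarith
  obtain ⟨δ, hδdef⟩ : ∃ δ : ℝ, δ = R - (m:ℝ) := ⟨_, rfl⟩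
  rw [← hδdef] at htail
  rw [show (R - (m:ℝ)) * (R + m) = δ * (R + m) by rw [hδdef]] at hfm2
  have hδ0 : 0 ≤ δ := by rw [hδdef]; linarith
  have hδ1 : δ < 1 := by rw [hδdef]; linarith
  -- key polynomial inequality
  have hkey : δ * (1 - δ) ^ 2 ≤ 4 / 27 := by
    nlinarith [mul_nonneg (sq_nonneg (3 * δ - 1)) (by linarith : (0:ℝ) ≤ 4 - 3 * δ)]
  have h1δ : 0 ≤ 1 - δ := by linarith
  -- squares comparison
  have h6 : Real.sqrt 6 ^ 2 = 6 := Real.sq_sqrt (by norm_num)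
  have hm2 : Real.sqrt ((m:ℝ) + 1/2) ^ 2 = (m:ℝ) + 1/2 := Real.sq_sqrt (by positivity)
  have hsqs : (f (m:ℝ) * (1 - δ) / 2) ^ 2 ≤ (Real.sqrt 6 / 9 * Real.sqrt ((m:ℝ) + 1/2)) ^ 2 := by
    have e1 : (f (m:ℝ) * (1 - δ) / 2) ^ 2 = δ * (R + m) * (1 - δ) ^ 2 / 4 := by
      rw [div_pow, mul_pow, hfm2]; ring
    have e2 : (Real.sqrt 6 / 9 * Real.sqrt ((m:ℝ) + 1/2)) ^ 2 = (2 * m + 1) / 27 := by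
      rw [mul_pow, div_pow, h6, hm2]; ring
    rw [e1, e2]
    have hRm' : R + (m:ℝ) ≤ 2 * m + 1 := by linarith
    have hpos : 0 ≤ δ * (1 - δ) ^ 2 := mul_nonneg hδ0 (sq_nonneg _)
    have hA : δ * (1 - δ) ^ 2 * (R + (m:ℝ)) ≤ 4 / 27 * (R + (m:ℝ)) :=
      mul_le_mul_of_nonneg_right hkey (by linarith)
    have hB : (4:ℝ) / 27 * (R + (m:ℝ)) ≤ 4 / 27 * (2 * (m:ℝ) + 1) := by linarith
    linarith [hA, hB]
  have hstep5 : f (m:ℝ) * (1 - δ) / 2 ≤ Real.sqrt 6 / 9 * Real.sqrt ((m:ℝ) + 1/2) := by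
    have hL : 0 ≤ f (m:ℝ) * (1 - δ) / 2 := by positivity
    have hRr : 0 ≤ Real.sqrt 6 / 9 * Real.sqrt ((m:ℝ) + 1/2) := by positivity
    have := Real.sqrt_le_sqrt hsqs
    rwa [Real.sqrt_sq hL, Real.sqrt_sq hRr] at this
  constructor
  · calc ∑ k ∈ Finset.Icc 1 m, f (k:ℝ)
        ≤ (∫ x in (0:ℝ)..(m:ℝ), f x) - (R - f (m:ℝ)) / 2 := hmain
      _ ≤ π / 4 * R ^ 2 - R / 2 + f (m:ℝ) * (1 - δ) / 2 := by
          linarith [hsplit, htail]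
      _ ≤ π / 4 * R ^ 2 - R / 2 + Real.sqrt 6 / 9 * Real.sqrt ((m:ℝ) + 1/2) := by linarith
  · have hlast : Real.sqrt 6 / 9 * Real.sqrt ((m:ℝ) + 1/2) ≤ R / 3 := by
      have hsq : (Real.sqrt 6 / 9 * Real.sqrt ((m:ℝ) + 1/2)) ^ 2 ≤ (R / 3) ^ 2 := by
        rw [mul_pow, div_pow, h6, hm2]
        nlinarith [hm0, hmR]
      have hRr : 0 ≤ Real.sqrt 6 / 9 * Real.sqrt ((m:ℝ) + 1/2) := by positivity
      have := Real.sqrt_le_sqrt hsq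
      rwa [Real.sqrt_sq hRr, Real.sqrt_sq (by linarith : (0:ℝ) ≤ R / 3)] at this
    calc ∑ k ∈ Finset.Icc 1 m, f (k:ℝ)
        ≤ (∫ x in (0:ℝ)..(m:ℝ), f x) - (R - f (m:ℝ)) / 2 := hmain
      _ ≤ π / 4 * R ^ 2 - R / 2 + f (m:ℝ) * (1 - δ) / 2 := by linarith [hsplit, htail]
      _ ≤ π / 4 * R ^ 2 - R / 6 := by linarith
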